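/- Let n ≥ 2, let 0 ≤ λ < 1, and let (A_t)_{t≥1} be a sequence of n×n real symmetric doubly stochastic matrices such that for every t, every nonzero v ∈ ℝⁿ with ∑ᵢ vᵢ = 0 and every μ ∈ ℝ with A_t·v = μ·v, one has |μ| ≤ λ. Let p₀ ∈ ℝⁿ be a probability vector and define p_t = A_t · p_{t−1} for t ≥ 1. Then for every real c > 0 and every natural number t with t ≥ c·(ln n)/(1 − λ), one has ‖p_t − u‖ ≤ n^{−c}, where u is the uniform vector with every entry 1/n and ‖·‖ is the Euclidean norm. -/

import Mathlib

open scoped RealInnerProductSpace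

lemma contract (n : ℕ) (lam : ℝ) (hlam0 : 0 ≤ lam)
    (B : Matrix (Fin n) (Fin n) ℝ) (hsymm : B.IsSymm)
    (hpres : ∀ w : Fin n → ℝ, (∑ i, w i) = 0 → ∑ i, B.mulVec w i = 0)
    (hbound : ∀ w : Fin n → ℝ, w ≠ 0 → (∑ i, w i) = 0 →
      ∀ μ : ℝ, B.mulVec w = μ • w → |μ| ≤ lam)
    (v : Fin n → ℝ) (hv : ∑ i, v i = 0) :
    Real.sqrt (∑ i, (B.mulVec v i) ^ 2) ≤ lam * Real.sqrt (∑ i, v i ^ 2) := by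
  classical
  set E := EuclideanSpace ℝ (Fin n)
  let T : E →ₗ[ℝ] E :=
    { toFun := fun w => WithLp.toLp 2 (B.mulVec w)
      map_add' := fun x y => by show WithLp.toLp 2 (B.mulVec (x.ofLp + y.ofLp)) = _; rw [Matrix.mulVec_add]; rfl
      map_smul' := fun c x => by show WithLp.toLp 2 (B.mulVec (c • x.ofLp)) = _; rw [Matrix.mulVec_smul]; rfl }
  let W : Submodule ℝ E :=
    { carrier := {w | ∑ i, w i = 0}
      add_mem' := by intro a b ha hb; simp only [Set.mem_setOf_eq] at *
                     show ∑ i, (a i + b i) = 0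
                     rw [Finset.sum_add_distrib, ha, hb, add_zero]
      zero_mem' := by show ∑ i : Fin n, (0 : Fin n → ℝ) i = 0; simp
      smul_mem' := by intro c a ha; simp only [Set.mem_setOf_eq] at *
                      show ∑ i, c * a i = 0
                      rw [← Finset.mul_sum, ha, mul_zero] }
  have hTW : ∀ w ∈ W, T w ∈ W := fun w hw => hpres w hw
  let T' : W →ₗ[ℝ] W := T.restrict hTW
  have hTsymm : ∀ a b : E, ⟪T a, b⟫ = ⟪a, T b⟫ := by
    intro a b
    show ∑ i, ⟪B.mulVec a i, b i⟫ = ∑ i, ⟪a i, B.mulVec b i⟫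
    simp only [RCLike.inner_apply, starRingEnd_apply, star_trivial]
    rw [Finset.sum_congr rfl (fun x _ => mul_comm (b.ofLp x) _),
      Finset.sum_congr rfl (fun x _ => mul_comm (B.mulVec b.ofLp x) _)]
    show ∑ i, B.mulVec a i * b i = ∑ i, a i * B.mulVec b i
    simp only [Matrix.mulVec, dotProduct]
    simp only [Finset.sum_mul, Finset.mul_sum]
    rw [Finset.sum_comm]
    apply Finset.sum_congr rfl; intro i _
    apply Finset.sum_congr rfl; intro j _
    rw [hsymm.apply i j]; ring
  have hT' : T'.IsSymmetric := by
    intro x y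
    have := hTsymm (x : E) (y : E)
    simpa [T', Submodule.coe_inner] using this
  have hrank : Module.finrank ℝ W = Module.finrank ℝ W := rfl
  let b := hT'.eigenvectorBasis hrank
  let μ := hT'.eigenvalues hrank
  have hμ : ∀ i, |μ i| ≤ lam := by
    intro i
    have hbne : (b i : E) ≠ 0 := by
      have := b.orthonormal.ne_zero i
      exact fun h => this (Subtype.coe_injective (by simpa using h))
    refine hbound (b i : E) (fun h => hbne (by simpa using congrArg (WithLp.toLp 2) h)) (b i).2 (μ i) ?_
    have := hT'.apply_eigenvectorBasis hrank i
    have h2 := congrArg (Subtype.val) this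
    rw [LinearMap.restrict_coe_apply] at h2
    have h3 : T ((b i : E)) = μ i • (b i : E) := by
      rw [h2, Submodule.coe_smul]; norm_num; rfl
    exact congrArg WithLp.ofLp h3
  -- main bound for w in W
  have key : ∀ w : W, ‖T' w‖ ≤ lam * ‖w‖ := by
    intro w
    have hrepr : ∀ i, b.repr (T' w) i = μ i * b.repr w i := by
      intro i
      rw [b.repr_apply_apply, b.repr_apply_apply]
      have : ⟪b i, T' w⟫ = ⟪T' (b i), w⟫ := (hT' (b i) w).symm
      rw [this, hT'.apply_eigenvectorBasis hrank i, real_inner_smul_left]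
      norm_num
      rfl
    have h1 : ‖T' w‖ = Real.sqrt (∑ i, (μ i * b.repr w i) ^ 2) := by
      rw [← b.repr.norm_map (T' w), EuclideanSpace.norm_eq]
      congr 1; apply Finset.sum_congr rfl; intro i _
      rw [hrepr i, Real.norm_eq_abs, sq_abs]
    have h2 : ‖w‖ = Real.sqrt (∑ i, (b.repr w i) ^ 2) := by
      rw [← b.repr.norm_map w, EuclideanSpace.norm_eq]
      congr 1; apply Finset.sum_congr rfl; intro i _
      rw [Real.norm_eq_abs, sq_abs]
    rw [h1, h2, ← Real.sqrt_sq hlam0, ← Real.sqrt_mul (sq_nonneg lam)]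
    apply Real.sqrt_le_sqrt
    rw [Finset.mul_sum]
    apply Finset.sum_le_sum
    intro i _
    rw [mul_pow]
    apply mul_le_mul_of_nonneg_right _ (sq_nonneg _)
    rw [← sq_abs (μ i)]
    exact pow_le_pow_left₀ (abs_nonneg _) (hμ i) 2
  -- apply
  have hvW : (WithLp.toLp 2 v : E) ∈ W := hv
  have := key ⟨(WithLp.toLp 2 v : E), hvW⟩
  have hl : ‖T' ⟨(WithLp.toLp 2 v : E), hvW⟩‖ = Real.sqrt (∑ i, (B.mulVec v i) ^ 2) := by
    rw [Submodule.coe_norm]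
    show ‖(T (WithLp.toLp 2 v : E))‖ = _
    rw [EuclideanSpace.norm_eq]
    congr 1; apply Finset.sum_congr rfl; intro i _; rw [Real.norm_eq_abs, sq_abs]; rfl
  have hr : ‖(⟨(WithLp.toLp 2 v : E), hvW⟩ : W)‖ = Real.sqrt (∑ i, v i ^ 2) := by
    rw [Submodule.coe_norm, EuclideanSpace.norm_eq]
    congr 1; apply Finset.sum_congr rfl; intro i _; rw [Real.norm_eq_abs, sq_abs]
  rw [hl, hr] at this
  exact this


/-- Mixing-time theorem for regular evolving graphs: if every per-round transition matrix
is symmetric doubly stochastic with second largest eigenvalue (in absolute value) at most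
`λ < 1`, then for every `c > 0` and every `t ≥ c·ln n/(1−λ)` the walk's distribution
satisfies `‖p_t − u‖ ≤ n^{−c}`. -/
theorem stmt_2 (n : ℕ) (hn : 2 ≤ n) (lam : ℝ) (hlam0 : 0 ≤ lam) (hlam1 : lam < 1)
    (A : ℕ → Matrix (Fin n) (Fin n) ℝ)
    (hsymm : ∀ t, (A t).IsSymm)
    (hnonneg : ∀ t i j, 0 ≤ A t i j)
    (hrow : ∀ t i, ∑ j, A t i j = 1)
    (hcol : ∀ t j, ∑ i, A t i j = 1)
    (hbound : ∀ t, ∀ v : Fin n → ℝ, v ≠ 0 → (∑ i, v i) = 0 →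
      ∀ μ : ℝ, (A t).mulVec v = μ • v → |μ| ≤ lam)
    (p : ℕ → Fin n → ℝ)
    (hp0 : ∀ i, 0 ≤ p 0 i) (hp1 : ∑ i, p 0 i = 1)
    (hrec : ∀ t, p (t + 1) = (A (t + 1)).mulVec (p t)) :
    ∀ c : ℝ, 0 < c → ∀ t : ℕ, c * Real.log n / (1 - lam) ≤ t →
      Real.sqrt (∑ i, (p t i - 1 / n) ^ 2) ≤ (n : ℝ) ^ (-c) := by
  intro c hc t ht
  have hn0 : (0 : ℝ) < n := by positivity
  -- column sums imply mulVec preserves total sum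
  have hpres : ∀ s, ∀ w : Fin n → ℝ, (∑ i, w i) = 0 → ∑ i, (A s).mulVec w i = 0 := by
    intro s w hw
    simp only [Matrix.mulVec, dotProduct]
    rw [Finset.sum_comm]
    calc ∑ j, ∑ i, A s i j * w j = ∑ j, (∑ i, A s i j) * w j := by
          simp [Finset.sum_mul]
      _ = ∑ j, w j := by simp [hcol s]
      _ = 0 := hw
  -- the centered vector
  set q : ℕ → Fin n → ℝ := fun t i => p t i - 1 / n with hqdef
  have hsum1 : ∀ s, ∑ i, p s i = 1 := by
    intro s
    induction s with
    | zero => exact hp1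
    | succ s ih =>
      rw [hrec s]
      simp only [Matrix.mulVec, dotProduct]
      rw [Finset.sum_comm]
      calc ∑ j, ∑ i, A (s+1) i j * p s j = ∑ j, (∑ i, A (s+1) i j) * p s j := by
            simp [Finset.sum_mul]
        _ = ∑ j, p s j := by simp [hcol (s+1)]
        _ = 1 := ih
  have hqsum : ∀ s, ∑ i, q s i = 0 := by
    intro s
    simp only [hqdef]
    rw [Finset.sum_sub_distrib, hsum1 s]
    simp
    field_simp
    norm_num
  have hqrec : ∀ s, q (s + 1) = (A (s + 1)).mulVec (q s) := by
    intro s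
    funext i
    have : (A (s+1)).mulVec (q s) i
        = (A (s+1)).mulVec (p s) i - (∑ j, A (s+1) i j) * (1 / n) := by
      simp only [Matrix.mulVec, dotProduct, hqdef]
      rw [Finset.sum_mul]
      rw [← Finset.sum_sub_distrib]
      apply Finset.sum_congr rfl
      intro j _
      ring
    rw [this, hrow (s+1) i, one_mul]
    simp only [hqdef, hrec s]
  -- norm recursion
  set N : ℕ → ℝ := fun s => Real.sqrt (∑ i, q s i ^ 2) with hNdef
  have hNrec : ∀ s, N (s + 1) ≤ lam * N s := by
    intro s
    have := contract n lam hlam0 (A (s+1)) (hsymm (s+1)) (hpres (s+1)) (hbound (s+1))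
      (q s) (hqsum s)
    simpa [hNdef, hqrec s] using this
  have hNpow : ∀ s, N s ≤ lam ^ s * N 0 := by
    intro s
    induction s with
    | zero => simp
    | succ s ih =>
      calc N (s+1) ≤ lam * N s := hNrec s
        _ ≤ lam * (lam ^ s * N 0) := by
            apply mul_le_mul_of_nonneg_left ih hlam0
        _ = lam ^ (s+1) * N 0 := by ring
  -- N 0 ≤ 1
  have hN0 : N 0 ≤ 1 := by
    have hsq : ∑ i, q 0 i ^ 2 ≤ 1 := by
      have hexp : ∑ i, q 0 i ^ 2 = ∑ i, p 0 i ^ 2 - 1 / n := by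
        simp only [hqdef]
        have : ∀ i : Fin n, (p 0 i - 1/n)^2 = p 0 i ^2 - (2/n) * p 0 i + 1/n^2 := by
          intro i; field_simp; ring
        rw [Finset.sum_congr rfl (fun i _ => this i)]
        rw [Finset.sum_add_distrib, Finset.sum_sub_distrib, ← Finset.mul_sum, hp1]
        simp [Finset.sum_const, Finset.card_univ]
        field_simp
        ring
      have hle : ∑ i, p 0 i ^ 2 ≤ 1 := by
        calc ∑ i, p 0 i ^ 2 ≤ ∑ i, p 0 i := by
              apply Finset.sum_le_sum
              intro i _
              have hle1 : p 0 i ≤ 1 := by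
                rw [← hp1]
                exact Finset.single_le_sum (fun j _ => hp0 j) (Finset.mem_univ i)
              nlinarith [hp0 i]
          _ = 1 := hp1
      have : (0:ℝ) < 1 / n := by positivity
      linarith
    calc N 0 ≤ Real.sqrt 1 := Real.sqrt_le_sqrt hsq
      _ = 1 := Real.sqrt_one
  -- combine
  have hNt : N t ≤ lam ^ t := by
    calc N t ≤ lam ^ t * N 0 := hNpow t
      _ ≤ lam ^ t * 1 := by
          apply mul_le_mul_of_nonneg_left hN0 (pow_nonneg hlam0 t)
      _ = lam ^ t := mul_one _
  have hlampow : lam ^ t ≤ (n : ℝ) ^ (-c) := by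
    have h1 : lam ≤ Real.exp (lam - 1) := by
      have := Real.add_one_le_exp (lam - 1)
      linarith
    have h2 : lam ^ t ≤ Real.exp ((lam - 1) * t) := by
      calc lam ^ t ≤ (Real.exp (lam - 1)) ^ t := pow_le_pow_left₀ hlam0 h1 t
        _ = Real.exp ((lam - 1) * t) := by rw [← Real.exp_nat_mul]; ring_nf
    have h3 : c * Real.log n ≤ (1 - lam) * t := by
      have hpos : (0:ℝ) < 1 - lam := by linarith
      rw [div_le_iff₀ hpos] at ht
      linarith [ht]
    have h4 : (lam - 1) * t ≤ -(c * Real.log n) := by nlinarith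
    calc lam ^ t ≤ Real.exp ((lam - 1) * t) := h2
      _ ≤ Real.exp (-(c * Real.log n)) := Real.exp_le_exp.mpr h4
      _ = (n : ℝ) ^ (-c) := by
          rw [Real.rpow_def_of_pos hn0]
          ring_nf
  have : Real.sqrt (∑ i, (p t i - 1 / n) ^ 2) = N t := rfl
  rw [this]
  exact le_trans hNt hlampow
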